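/- arXiv:2605.10784 — 3 statements merged into one kernel-verified Lean document; each statement's English description precedes it below -/
import Mathlib

section
/- The Hessian of L(θ) = -log σ(-log Σ_{j=1}^m exp(β(φ_j·θ + b_j))) equals β²(1-σ(Z(θ)))[σ(Z(θ)) φ̄ φ̄^⊤ + Σ_j q_j(θ)(φ_j - φ̄)(φ_j - φ̄)^⊤], where Z(θ) = -log Σ_j exp(β(φ_j·θ + b_j)), q_j are the softmax weights, and φ̄ = Σ_j q_j(θ) φ_j. -/
open RealInnerProductSpace Finset

noncomputable def sigmoid (z : ℝ) : ℝ := 1 / (1 + Real.exp (-z))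

noncomputable def Zfun {d m : ℕ} (φ : Fin m → EuclideanSpace ℝ (Fin d))
    (b : Fin m → ℝ) (β : ℝ) (θ : EuclideanSpace ℝ (Fin d)) : ℝ :=
  -Real.log (∑ j, Real.exp (β * (⟪φ j, θ⟫ + b j)))

noncomputable def softmaxWeight {d m : ℕ} (φ : Fin m → EuclideanSpace ℝ (Fin d))
    (b : Fin m → ℝ) (β : ℝ) (θ : EuclideanSpace ℝ (Fin d)) (j : Fin m) : ℝ :=
  Real.exp (β * (⟪φ j, θ⟫ + b j)) / ∑ k, Real.exp (β * (⟪φ k, θ⟫ + b k))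

noncomputable def softmaxMean {d m : ℕ} (φ : Fin m → EuclideanSpace ℝ (Fin d))
    (b : Fin m → ℝ) (β : ℝ) (θ : EuclideanSpace ℝ (Fin d)) : EuclideanSpace ℝ (Fin d) :=
  ∑ j, softmaxWeight φ b β θ j • φ j

lemma hasFDerivAt_S {d m : ℕ} (φ : Fin m → EuclideanSpace ℝ (Fin d)) (b : Fin m → ℝ) (β : ℝ)
    (θ : EuclideanSpace ℝ (Fin d)) :
    HasFDerivAt (fun θ : EuclideanSpace ℝ (Fin d) => ∑ j, Real.exp (β * (⟪φ j, θ⟫ + b j)))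
      (∑ j, (β * Real.exp (β * (⟪φ j, θ⟫ + b j))) • (innerSL ℝ (φ j))) θ := by
  apply HasFDerivAt.fun_sum
  intro j _
  have h1 : HasFDerivAt (fun θ : EuclideanSpace ℝ (Fin d) => β * (⟪φ j, θ⟫ + b j))
      (β • innerSL ℝ (φ j)) θ :=
    (((innerSL ℝ (φ j)).hasFDerivAt (x := θ)).add_const (b j)).const_mul β
  have := h1.exp
  refine this.congr_fderiv ?_
  rw [smul_smul, mul_comm]

lemma sigmoid_Z {d m : ℕ} (φ : Fin m → EuclideanSpace ℝ (Fin d)) (b : Fin m → ℝ) (β : ℝ) (hm : 0 < m)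
    (θ : EuclideanSpace ℝ (Fin d)) :
    sigmoid (Zfun φ b β θ) = (1 + ∑ j, Real.exp (β * (⟪φ j, θ⟫ + b j)))⁻¹ := by
  have hS : 0 < ∑ j, Real.exp (β * (⟪φ j, θ⟫ + b j)) :=
    Finset.sum_pos (fun j _ => Real.exp_pos _)
      (Finset.univ_nonempty_iff.2 (Fin.pos_iff_nonempty.1 hm))
  simp only [sigmoid, Zfun, neg_neg, Real.exp_log hS, one_div]

lemma gradient_L_eq {d m : ℕ} (φ : Fin m → EuclideanSpace ℝ (Fin d)) (b : Fin m → ℝ) (β : ℝ)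
    (hm : 0 < m) :
    (gradient (fun θ : EuclideanSpace ℝ (Fin d) => -Real.log (sigmoid (Zfun φ b β θ))))
      = fun θ => (1 + ∑ j, Real.exp (β * (⟪φ j, θ⟫ + b j)))⁻¹ •
          ∑ j, (β * Real.exp (β * (⟪φ j, θ⟫ + b j))) • φ j := by
  have hS : ∀ θ : EuclideanSpace ℝ (Fin d), 0 < ∑ j, Real.exp (β * (⟪φ j, θ⟫ + b j)) :=
    fun θ => Finset.sum_pos (fun j _ => Real.exp_pos _)
      (Finset.univ_nonempty_iff.2 (Fin.pos_iff_nonempty.1 hm))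
  have hL : (fun θ : EuclideanSpace ℝ (Fin d) => -Real.log (sigmoid (Zfun φ b β θ)))
      = fun θ => Real.log (1 + ∑ j, Real.exp (β * (⟪φ j, θ⟫ + b j))) := by
    funext θ
    rw [sigmoid_Z φ b β hm θ, Real.log_inv, neg_neg]
  rw [hL]
  funext θ
  apply HasGradientAt.gradient
  rw [hasGradientAt_iff_hasFDerivAt]
  have hpos : (0:ℝ) < 1 + ∑ j, Real.exp (β * (⟪φ j, θ⟫ + b j)) := by linarith [hS θ]
  have hf : HasFDerivAt
      (fun θ : EuclideanSpace ℝ (Fin d) => 1 + ∑ j, Real.exp (β * (⟪φ j, θ⟫ + b j)))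
      (∑ j, (β * Real.exp (β * (⟪φ j, θ⟫ + b j))) • (innerSL ℝ (φ j))) θ :=
    (hasFDerivAt_S φ b β θ).const_add 1
  have hlog := hf.log (ne_of_gt hpos)
  refine hlog.congr_fderiv ?_
  ext v
  simp [real_inner_smul_left, sum_inner, ContinuousLinearMap.sum_apply, Finset.mul_sum]

lemma term_expand (e x y S A C : ℝ) (hS : S ≠ 0) :
    (e / S) * ((x - A / S) * (y - C / S))
      = e * (x * y) / S - e * x * (C / (S * S)) - e * y * (A / (S * S))
        + e * (A * C / (S * S * S)) := by
  field_simp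
  ring

theorem hessian_multiNegativeLoss {d m : ℕ} (φ : Fin m → EuclideanSpace ℝ (Fin d))
    (b : Fin m → ℝ) (β : ℝ) (hβ : 0 < β) (θ : EuclideanSpace ℝ (Fin d))
    (u w : EuclideanSpace ℝ (Fin d)) :
    ⟪(fderiv ℝ (gradient (fun θ => -Real.log (sigmoid (Zfun φ b β θ)))) θ) u, w⟫
      = β ^ 2 * (1 - sigmoid (Zfun φ b β θ))
          * (sigmoid (Zfun φ b β θ)
                * (⟪softmaxMean φ b β θ, u⟫ * ⟪softmaxMean φ b β θ, w⟫)
            + ∑ j, softmaxWeight φ b β θ j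
                * (⟪φ j - softmaxMean φ b β θ, u⟫
                    * ⟪φ j - softmaxMean φ b β θ, w⟫)) := by
  rcases Nat.eq_zero_or_pos m with hm | hm
  · subst hm
    have hconst : (fun θ : EuclideanSpace ℝ (Fin d) => -Real.log (sigmoid (Zfun φ b β θ)))
        = fun _ => -Real.log (sigmoid 0) := by
      funext θ; simp [Zfun]
    have h0 : (gradient (fun θ : EuclideanSpace ℝ (Fin d)
        => -Real.log (sigmoid (Zfun φ b β θ)))) = fun _ => 0 := by
      rw [hconst]; funext x; exact gradient_const x _
    rw [h0]
    simp [softmaxMean]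
  · rw [gradient_L_eq φ b β hm]
    have hS : 0 < ∑ j, Real.exp (β * (⟪φ j, θ⟫ + b j)) :=
      Finset.sum_pos (fun j _ => Real.exp_pos _)
        (Finset.univ_nonempty_iff.2 (Fin.pos_iff_nonempty.1 hm))
    have hpos : (0:ℝ) < 1 + ∑ j, Real.exp (β * (⟪φ j, θ⟫ + b j)) := by linarith
    have hc : HasFDerivAt
        (fun θ : EuclideanSpace ℝ (Fin d) => (1 + ∑ j, Real.exp (β * (⟪φ j, θ⟫ + b j)))⁻¹)
        (-(((1 + ∑ j, Real.exp (β * (⟪φ j, θ⟫ + b j))) ^ 2)⁻¹) •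
          ∑ j, (β * Real.exp (β * (⟪φ j, θ⟫ + b j))) • (innerSL ℝ (φ j))) θ := by
      have := (hasDerivAt_inv (ne_of_gt hpos)).comp_hasFDerivAt θ
        ((hasFDerivAt_S φ b β θ).const_add 1)
      exact this
    have hV : HasFDerivAt
        (fun θ : EuclideanSpace ℝ (Fin d) => ∑ j, (β * Real.exp (β * (⟪φ j, θ⟫ + b j))) • φ j)
        (∑ j, ((β * (β * Real.exp (β * (⟪φ j, θ⟫ + b j)))) • innerSL ℝ (φ j)).smulRight (φ j))
        θ := by
      apply HasFDerivAt.fun_sum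
      intro j _
      have h1 : HasFDerivAt (fun θ : EuclideanSpace ℝ (Fin d) => β * (⟪φ j, θ⟫ + b j))
          (β • innerSL ℝ (φ j)) θ :=
        (((innerSL ℝ (φ j)).hasFDerivAt (x := θ)).add_const (b j)).const_mul β
      have h2 := (h1.exp).const_mul β
      have h3 := h2.smul_const (φ j)
      refine h3.congr_fderiv ?_
      congr 1
      rw [smul_smul, smul_smul]
      congr 1
      ring
    have hG := hc.fun_smul hV
    rw [hG.fderiv]
    simp only [ContinuousLinearMap.add_apply, ContinuousLinearMap.smul_apply,
      ContinuousLinearMap.coe_smul', Pi.smul_apply, ContinuousLinearMap.smulRight_apply,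
      ContinuousLinearMap.sum_apply, innerSL_apply_apply, inner_add_left, real_inner_smul_left,
      sum_inner, smul_eq_mul, ContinuousLinearMap.neg_apply, inner_neg_left]
    rw [sigmoid_Z φ b β hm θ]
    have hS0 : (∑ j, Real.exp (β * (⟪φ j, θ⟫ + b j))) ≠ 0 := ne_of_gt hS
    have h1S : (1 + ∑ j, Real.exp (β * (⟪φ j, θ⟫ + b j))) ≠ 0 := ne_of_gt hpos
    have hmean_u : ⟪softmaxMean φ b β θ, u⟫
        = (∑ x, Real.exp (β * (⟪φ x, θ⟫ + b x)) * ⟪φ x, u⟫)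
          / ∑ x, Real.exp (β * (⟪φ x, θ⟫ + b x)) := by
      simp only [softmaxMean, sum_inner, real_inner_smul_left, softmaxWeight]
      rw [Finset.sum_div]
      exact Finset.sum_congr rfl fun x _ => by rw [div_mul_eq_mul_div]
    have hmean_w : ⟪softmaxMean φ b β θ, w⟫
        = (∑ x, Real.exp (β * (⟪φ x, θ⟫ + b x)) * ⟪φ x, w⟫)
          / ∑ x, Real.exp (β * (⟪φ x, θ⟫ + b x)) := by
      simp only [softmaxMean, sum_inner, real_inner_smul_left, softmaxWeight]
      rw [Finset.sum_div]
      exact Finset.sum_congr rfl fun x _ => by rw [div_mul_eq_mul_div]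
    have lP : (∑ x, β * (β * Real.exp (β * (⟪φ x, θ⟫ + b x))) * ⟪φ x, u⟫ * ⟪φ x, w⟫)
        = β ^ 2 * ∑ x, Real.exp (β * (⟪φ x, θ⟫ + b x)) * (⟪φ x, u⟫ * ⟪φ x, w⟫) := by
      rw [Finset.mul_sum]; exact Finset.sum_congr rfl fun x _ => by ring
    have lA : (∑ x, β * Real.exp (β * (⟪φ x, θ⟫ + b x)) * ⟪φ x, u⟫)
        = β * ∑ x, Real.exp (β * (⟪φ x, θ⟫ + b x)) * ⟪φ x, u⟫ := by
      rw [Finset.mul_sum]; exact Finset.sum_congr rfl fun x _ => by ring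
    have lC : (∑ x, β * Real.exp (β * (⟪φ x, θ⟫ + b x)) * ⟪φ x, w⟫)
        = β * ∑ x, Real.exp (β * (⟪φ x, θ⟫ + b x)) * ⟪φ x, w⟫ := by
      rw [Finset.mul_sum]; exact Finset.sum_congr rfl fun x _ => by ring
    rw [lP, lA, lC]
    simp only [softmaxWeight, inner_sub_left, hmean_u, hmean_w]
    generalize hgP : (∑ x, Real.exp (β * (⟪φ x, θ⟫ + b x)) * (⟪φ x, u⟫ * ⟪φ x, w⟫)) = P
    generalize hgA : (∑ x, Real.exp (β * (⟪φ x, θ⟫ + b x)) * ⟪φ x, u⟫) = A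
    generalize hgC : (∑ x, Real.exp (β * (⟪φ x, θ⟫ + b x)) * ⟪φ x, w⟫) = C
    generalize hgS : (∑ j, Real.exp (β * (⟪φ j, θ⟫ + b j))) = S
    have hS0' : S ≠ 0 := hgS ▸ hS0
    rw [Finset.sum_congr rfl (fun j (_ : j ∈ Finset.univ) =>
      term_expand (Real.exp (β * (⟪φ j, θ⟫ + b j))) ⟪φ j, u⟫ ⟪φ j, w⟫ S A C hS0')]
    rw [Finset.sum_add_distrib, Finset.sum_sub_distrib, Finset.sum_sub_distrib,
      ← Finset.sum_div, ← Finset.sum_mul, ← Finset.sum_mul, ← Finset.sum_mul,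
      hgP, hgA, hgC, hgS]
    have h1S' : 1 + S ≠ 0 := hgS ▸ h1S
    field_simp
    ring
end

section
/- Elliptic potential lemma: let H_0 = γI with γ > 0, and H_k = H_{k-1} + α v_k v_k^⊤ for vectors v_k ∈ ℝ^d with ‖v_k‖² ≤ L and α > 0. Then Σ_{k=1}^n v_k^⊤ H_{k-1}^{-1} v_k ≤ ((1 + αL/γ)/α) · d log(1 + α n L/(γ d)). -/
open scoped Matrix

open Finset

lemma aux_log_lb {t M : ℝ} (ht : 0 ≤ t) (htM : t ≤ M) : t / (1 + M) ≤ Real.log (1 + t) := by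
  have h1t : (0:ℝ) < 1 + t := by linarith
  have h1M : (0:ℝ) < 1 + M := by linarith
  have h := Real.log_le_sub_one_of_pos (inv_pos.mpr h1t)
  rw [Real.log_inv] at h
  have heq : 1 - (1+t)⁻¹ = t / (1+t) := by field_simp; ring
  have hlog : t / (1 + t) ≤ Real.log (1 + t) := by linarith [heq]
  exact le_trans (div_le_div_of_nonneg_left ht h1t (by linarith)) hlog

lemma aux_amgm {d : ℕ} (hd : 0 < d) (μ : Fin d → ℝ) (hμ : ∀ i, 0 ≤ μ i) :
    (∏ i, μ i) ≤ ((∑ i, μ i) / d) ^ d := by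
  have hd' : (0:ℝ) < d := by exact_mod_cast hd
  have key := Real.geom_mean_le_arith_mean_weighted Finset.univ (fun _ => 1 / d) μ
    (fun i _ => by positivity)
    (by simp [Finset.sum_const]; field_simp)
    (fun i _ => hμ i)
  have hL : ∏ i, μ i ^ (1/(d:ℝ)) = (∏ i, μ i) ^ (1/(d:ℝ)) := by
    rw [← Real.finset_prod_rpow _ _ (fun i _ => hμ i)]
  have hprod : (0:ℝ) ≤ ∏ i, μ i := Finset.prod_nonneg (fun i _ => hμ i)
  have hR : ∑ i, (1/(d:ℝ)) * μ i = (∑ i, μ i) / d := by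
    rw [← Finset.mul_sum]; ring
  rw [hL, hR] at key
  have := pow_le_pow_left₀ (Real.rpow_nonneg hprod _) key d
  rwa [← Real.rpow_natCast ((∏ i, μ i) ^ (1/(d:ℝ))) d, ← Real.rpow_mul hprod,
    one_div, inv_mul_cancel₀ (ne_of_gt hd'), Real.rpow_one] at this

lemma aux_trace_eq {d : ℕ} {A : Matrix (Fin d) (Fin d) ℝ} (hA : A.IsHermitian) :
    A.trace = ∑ i, hA.eigenvalues i := by
  simpa using hA.trace_eq_sum_eigenvalues

lemma aux_det_le_trace {d : ℕ} (hd : 0 < d) {A : Matrix (Fin d) (Fin d) ℝ}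
    (hA : A.PosSemidef) : A.det ≤ (A.trace / d) ^ d := by
  rw [hA.1.det_eq_prod_eigenvalues, aux_trace_eq hA.1]
  exact_mod_cast aux_amgm hd _ hA.eigenvalues_nonneg

lemma aux_smul_vecMulVec {d : ℕ} (α : ℝ) (w : Fin d → ℝ) :
    α • Matrix.vecMulVec w w = Matrix.vecMulVec (α • w) w := by
  ext i j; simp [Matrix.vecMulVec_apply, mul_assoc]

lemma aux_det_lemma {d : ℕ} (A : Matrix (Fin d) (Fin d) ℝ) (hA : IsUnit A.det)
    (α : ℝ) (w : Fin d → ℝ) :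
    (A + α • Matrix.vecMulVec w w).det = A.det * (1 + α * (w ⬝ᵥ A⁻¹ *ᵥ w)) := by
  rw [aux_smul_vecMulVec, Matrix.vecMulVec_eq Unit, Matrix.det_add_replicateCol_mul_replicateRow hA]
  congr 1
  rw [Matrix.det_unique]
  simp only [Matrix.add_apply, Matrix.one_apply_eq, Matrix.mul_apply, Matrix.replicateRow_apply,
    Matrix.replicateCol_apply, Matrix.mulVec, dotProduct, Pi.smul_apply, smul_eq_mul,
    Finset.mul_sum, Finset.sum_mul]
  congr 1
  rw [Finset.sum_comm]
  apply Finset.sum_congr rfl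
  intro j _
  apply Finset.sum_congr rfl
  intro i _
  ring

lemma aux_vv_psd {d : ℕ} (α : ℝ) (hα : 0 ≤ α) (w : Fin d → ℝ) :
    (α • Matrix.vecMulVec w w).PosSemidef := by
  refine Matrix.PosSemidef.of_dotProduct_mulVec_nonneg ?_ ?_
  · ext i j
    simp [Matrix.conjTranspose_apply, Matrix.vecMulVec_apply, mul_comm]
  · intro y
    have hy : ∀ i, ((α • Matrix.vecMulVec w w) *ᵥ y) i = α * w i * (w ⬝ᵥ y) := by
      intro i
      simp only [Matrix.mulVec, dotProduct, Pi.smul_apply, Matrix.smul_apply,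
        Matrix.vecMulVec_apply, smul_eq_mul, Finset.mul_sum]
      exact Finset.sum_congr rfl fun j _ => by ring
    have key : ∀ S : ℝ, ∑ j, y j * (α * w j * S) = α * S * ∑ j, w j * y j := by
      intro S
      rw [Finset.mul_sum]
      exact Finset.sum_congr rfl fun j _ => by ring
    have hmain : star y ⬝ᵥ ((α • Matrix.vecMulVec w w) *ᵥ y) = α * (w ⬝ᵥ y) ^ 2 := by
      calc star y ⬝ᵥ ((α • Matrix.vecMulVec w w) *ᵥ y)
          = ∑ j, y j * (α * w j * (w ⬝ᵥ y)) := by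
            simp [dotProduct, hy]
        _ = α * (w ⬝ᵥ y) * ∑ j, w j * y j := key _
        _ = α * (w ⬝ᵥ y) ^ 2 := by
            simp only [dotProduct, sq, mul_assoc]
    rw [hmain]
    positivity

theorem elliptic_potential_lemma {d n : ℕ} (hd : 0 < d) (γ α L : ℝ)
    (hγ : 0 < γ) (hα : 0 < α)
    (v : Fin n → Fin d → ℝ) (hv : ∀ k, ∑ i, v k i ^ 2 ≤ L)
    (H : Fin (n + 1) → Matrix (Fin d) (Fin d) ℝ)
    (h0 : H 0 = γ • 1)
    (hrec : ∀ k : Fin n,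
        H k.succ = H k.castSucc + α • Matrix.vecMulVec (v k) (v k)) :
    ∑ k : Fin n, v k ⬝ᵥ (H k.castSucc)⁻¹ *ᵥ v k
      ≤ ((1 + α * L / γ) / α) * (d * Real.log (1 + α * n * L / (γ * d))) := by
  classical
  have hd' : (0:ℝ) < d := by exact_mod_cast hd
  have hupd : ∀ k : Fin n, (α • Matrix.vecMulVec (v k) (v k)).PosSemidef :=
    fun k => aux_vv_psd α hα.le (v k)
  have hpd : ∀ k : Fin (n+1), (H k).PosDef := by
    intro k
    induction k using Fin.induction with
    | zero =>
        rw [h0, Matrix.smul_one_eq_diagonal]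
        exact Matrix.posDef_diagonal_iff.mpr fun _ => hγ
    | succ k ih => rw [hrec k]; exact ih.add_posSemidef (hupd k)
  have hpsdγ : ∀ k : Fin (n+1), (H k - γ • 1).PosSemidef := by
    intro k
    induction k using Fin.induction with
    | zero => rw [h0]; simpa using Matrix.PosSemidef.zero
    | succ k ih =>
        have heq : H k.succ - γ • 1
            = (H k.castSucc - γ • 1) + α • Matrix.vecMulVec (v k) (v k) := by
          rw [hrec k]; abel
        rw [heq]; exact ih.add (hupd k)
  set x : Fin n → ℝ := fun k => v k ⬝ᵥ (H k.castSucc)⁻¹ *ᵥ v k with hxdef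
  rcases Nat.eq_zero_or_pos n with rfl | hn
  · simp
  have hL : 0 ≤ L :=
    le_trans (Finset.sum_nonneg fun i _ => sq_nonneg _) (hv ⟨0, hn⟩)
  have hx0 : ∀ k, 0 ≤ x k := by
    intro k
    have hinv : (H k.castSucc)⁻¹.PosSemidef := ((hpd _).posSemidef).inv
    simpa [hxdef] using hinv.dotProduct_mulVec_nonneg (v k)
  have hxL : ∀ k, x k ≤ L / γ := by
    intro k
    set A := H k.castSucc with hA
    have hApd := hpd k.castSucc
    have hdet := hApd.det_pos
    set w := A⁻¹ *ᵥ v k with hw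
    have hAw : A *ᵥ w = v k := by
      rw [hw, Matrix.mulVec_mulVec,
        Matrix.mul_nonsing_inv _ (isUnit_iff_ne_zero.mpr hdet.ne'), Matrix.one_mulVec]
    have hxk : x k = v k ⬝ᵥ w := rfl
    have h1 : γ * (w ⬝ᵥ w) ≤ x k := by
      have hq := (hpsdγ k.castSucc).dotProduct_mulVec_nonneg w
      rw [← hA] at hq
      simp only [Matrix.sub_mulVec, Matrix.smul_mulVec, Matrix.one_mulVec, hAw,
        dotProduct_sub, dotProduct_smul, star_trivial, smul_eq_mul] at hq
      rw [dotProduct_comm] at hq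
      rw [hxk]
      linarith
    have hww : (0:ℝ) ≤ w ⬝ᵥ w := by
      simp only [dotProduct]
      exact Finset.sum_nonneg fun i _ => mul_self_nonneg _
    have h2 : (x k)^2 ≤ L * (w ⬝ᵥ w) := by
      have hcs := Finset.sum_mul_sq_le_sq_mul_sq Finset.univ (v k) w
      have hvk := hv k
      have hxs : x k = ∑ i, v k i * w i := hxk
      have hws : w ⬝ᵥ w = ∑ i, w i ^ 2 := by
        simp [dotProduct, sq]
      rw [hxs, hws]
      calc (∑ i, v k i * w i)^2 ≤ (∑ i, (v k i)^2) * (∑ i, w i ^ 2) := hcs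
        _ ≤ L * (∑ i, w i ^ 2) := by
            apply mul_le_mul_of_nonneg_right hvk
            exact Finset.sum_nonneg fun i _ => sq_nonneg _
    rcases eq_or_lt_of_le (hx0 k) with h | h
    · rw [← h]; positivity
    · rw [le_div_iff₀ hγ]
      nlinarith [mul_le_mul_of_nonneg_left h1 hL, mul_lt_mul_of_pos_left h hγ]
  -- determinant recursion
  have hdetstep : ∀ k : Fin n,
      (H k.succ).det = (H k.castSucc).det * (1 + α * x k) := by
    intro k
    rw [hrec k]
    exact aux_det_lemma _ (isUnit_iff_ne_zero.mpr (hpd k.castSucc).det_pos.ne') α (v k)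
  have hxpos1 : ∀ k, (0:ℝ) < 1 + α * x k := by
    intro k
    have := mul_nonneg hα.le (hx0 k)
    linarith
  -- telescoping of log det
  have hmin : ∀ i : ℕ, min i n < n + 1 := fun i => Nat.lt_succ_of_le (Nat.min_le_right i n)
  set f : ℕ → ℝ := fun i => Real.log ((H ⟨min i n, hmin i⟩).det) with hf
  set X : ℕ → ℝ := fun i => if h : i < n then x ⟨i, h⟩ else 0 with hX
  have hstep : ∀ i ∈ Finset.range n,
      f (i+1) - f i = Real.log (1 + α * X i) := by
    intro i hi
    have hi' := Finset.mem_range.mp hi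
    have e1 : (⟨min (i+1) n, hmin (i+1)⟩ : Fin (n+1)) = (⟨i, hi'⟩ : Fin n).succ := by
      ext; simp [Fin.succ]; omega
    have e2 : (⟨min i n, hmin i⟩ : Fin (n+1)) = (⟨i, hi'⟩ : Fin n).castSucc := by
      ext; simp [Fin.castSucc, Fin.castAdd, Fin.castLE]; omega
    have hXi : X i = x ⟨i, hi'⟩ := dif_pos hi'
    simp only [hf, e1, e2, hXi]
    rw [hdetstep ⟨i, hi'⟩, Real.log_mul (hpd _).det_pos.ne' (hxpos1 _).ne']
    ring
  have htel := Finset.sum_range_sub f n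
  have hsum_log : ∑ k : Fin n, Real.log (1 + α * x k) = f n - f 0 := by
    have h1 : ∑ k : Fin n, Real.log (1 + α * x k)
        = ∑ i ∈ Finset.range n, Real.log (1 + α * X i) := by
      rw [← Fin.sum_univ_eq_sum_range (fun i => Real.log (1 + α * X i)) n]
      apply Finset.sum_congr rfl
      intro k _
      congr 2
      rw [hX]
      simp [k.isLt]
    rw [h1, ← htel]
    exact (Finset.sum_congr rfl hstep).symm
  have hf0 : f 0 = d * Real.log γ := by
    have e0 : (⟨min 0 n, hmin 0⟩ : Fin (n+1)) = 0 := by ext; simp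
    simp only [hf, e0, h0]
    rw [Matrix.det_smul, Matrix.det_one, mul_one]
    simp [Real.log_pow]
  -- trace bound
  set g : ℕ → ℝ := fun i => (H ⟨min i n, hmin i⟩).trace with hg
  have hgstep : ∀ i ∈ Finset.range n, g (i+1) - g i ≤ α * L := by
    intro i hi
    have hi' := Finset.mem_range.mp hi
    have e1 : (⟨min (i+1) n, hmin (i+1)⟩ : Fin (n+1)) = (⟨i, hi'⟩ : Fin n).succ := by
      ext; simp [Fin.succ]; omega
    have e2 : (⟨min i n, hmin i⟩ : Fin (n+1)) = (⟨i, hi'⟩ : Fin n).castSucc := by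
      ext; simp [Fin.castSucc, Fin.castAdd, Fin.castLE]; omega
    simp only [hg, e1, e2]
    rw [hrec ⟨i, hi'⟩, Matrix.trace_add]
    have htr : (α • Matrix.vecMulVec (v ⟨i, hi'⟩) (v ⟨i, hi'⟩)).trace
        = α * ∑ j, (v ⟨i, hi'⟩ j)^2 := by
      rw [Matrix.trace_smul, smul_eq_mul]
      congr 1
      simp [Matrix.trace, Matrix.diag, Matrix.vecMulVec_apply, sq]
    rw [htr]
    have := hv ⟨i, hi'⟩
    nlinarith
  have hgtel := Finset.sum_range_sub g n
  have hg0 : g 0 = γ * d := by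
    have e0 : (⟨min 0 n, hmin 0⟩ : Fin (n+1)) = 0 := by ext; simp
    simp only [hg, e0, h0]
    rw [Matrix.trace_smul, Matrix.trace_one]
    simp
  have htrace : g n ≤ γ * d + α * n * L := by
    have hsum : ∑ i ∈ Finset.range n, (g (i+1) - g i) ≤ n * (α * L) := by
      calc ∑ i ∈ Finset.range n, (g (i+1) - g i) ≤ ∑ _i ∈ Finset.range n, (α * L) :=
            Finset.sum_le_sum hgstep
        _ = n * (α * L) := by simp [Finset.sum_const, mul_comm]
    rw [hgtel] at hsum
    rw [hg0] at hsum
    nlinarith [hsum]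
  -- final log bound
  have hlast : (⟨min n n, hmin n⟩ : Fin (n+1)) = Fin.last n := by ext; simp
  have hAl := hpd (Fin.last n)
  have hdetpos : 0 < (H (Fin.last n)).det := hAl.det_pos
  have hQ : (0:ℝ) ≤ α * n * L / (γ * d) := by positivity
  have h1Q : (0:ℝ) < 1 + α * n * L / (γ * d) := by linarith
  have htr_pos : (0:ℝ) < γ * d := by positivity
  have htrpos : γ * d ≤ (H (Fin.last n)).trace := by
    have hps := hpsdγ (Fin.last n)
    have h2 : 0 ≤ (H (Fin.last n) - γ • 1).trace := by
      rw [aux_trace_eq hps.1]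
      exact Finset.sum_nonneg fun i _ => hps.eigenvalues_nonneg i
    rw [Matrix.trace_sub, Matrix.trace_smul, Matrix.trace_one, smul_eq_mul] at h2
    simp only [Fintype.card_fin] at h2
    linarith
  have hfn : f n ≤ d * (Real.log γ + Real.log (1 + α * n * L / (γ * d))) := by
    have hdl : (H (Fin.last n)).det ≤ ((H (Fin.last n)).trace / d) ^ d :=
      aux_det_le_trace hd hAl.posSemidef
    have htr_le : (H (Fin.last n)).trace / d ≤ γ * (1 + α * n * L / (γ * d)) := by
      have hgn : g n = (H (Fin.last n)).trace := by
        rw [hg]; simp only [hlast]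
      have hexp : γ * (1 + α * n * L / (γ * d)) = (γ * d + α * n * L) / d := by
        field_simp
      rw [hexp, div_le_div_iff_of_pos_right hd']
      rw [hgn] at htrace
      linarith
    have htrd : (0:ℝ) ≤ (H (Fin.last n)).trace / d := by
      apply div_nonneg _ hd'.le
      linarith
    have hpow : ((H (Fin.last n)).trace / d) ^ d
        ≤ (γ * (1 + α * n * L / (γ * d))) ^ d := pow_le_pow_left₀ htrd htr_le d
    have hfn1 : f n = Real.log ((H (Fin.last n)).det) := by
      rw [hf]; simp only [hlast]
    rw [hfn1]
    calc Real.log ((H (Fin.last n)).det)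
        ≤ Real.log ((γ * (1 + α * n * L / (γ * d))) ^ d) := by
          apply Real.log_le_log (by positivity)
          exact le_trans hdl hpow
      _ = d * Real.log (γ * (1 + α * n * L / (γ * d))) := by rw [Real.log_pow]
      _ = d * (Real.log γ + Real.log (1 + α * n * L / (γ * d))) := by
          rw [Real.log_mul hγ.ne' h1Q.ne']
  -- final assembly
  set c := (1 + α * L / γ) / α with hc
  have hM0 : (0:ℝ) ≤ α * L / γ := by positivity
  have hcpos : (0:ℝ) ≤ c := by rw [hc]; positivity
  have hterm : ∀ k : Fin n, x k ≤ c * Real.log (1 + α * x k) := by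
    intro k
    have hb := aux_log_lb (mul_nonneg hα.le (hx0 k))
      (show α * x k ≤ α * L / γ by
        rw [mul_div_assoc]
        exact mul_le_mul_of_nonneg_left (hxL k) hα.le)
    have hne : (1 + α * L / γ) ≠ 0 := by positivity
    have hcx : c * (α * x k / (1 + α * L / γ)) = x k := by
      rw [hc]
      field_simp
    calc x k = c * (α * x k / (1 + α * L / γ)) := hcx.symm
      _ ≤ c * Real.log (1 + α * x k) := mul_le_mul_of_nonneg_left hb hcpos
  calc ∑ k : Fin n, x k
      ≤ ∑ k : Fin n, c * Real.log (1 + α * x k) :=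
        Finset.sum_le_sum fun k _ => hterm k
    _ = c * (f n - f 0) := by rw [← Finset.mul_sum, hsum_log]
    _ ≤ c * (d * Real.log (1 + α * n * L / (γ * d))) := by
        apply mul_le_mul_of_nonneg_left _ hcpos
        rw [hf0]
        nlinarith [hfn]
end

section
/- Implicit-function perturbation bound: let F, G : ℝ^d → ℝ be twice continuously differentiable with minimizers θ* of F and θ̂ of G (so ∇F(θ*) = 0 and ∇G(θ̂) = 0). Suppose the integrated Hessian Σ̄ = ∫_0^1 ∇²G(θ* + t(θ̂ - θ*)) dt satisfies Σ̄ ⪰ Σ_0 for some positive definite Σ_0. Then ‖θ̂ - θ*‖_{Σ_0} ≤ ‖∇G(θ*) - ∇F(θ*)‖_{Σ_0^{-1}}, where ‖u‖_A = √(u^⊤ A u). -/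
open scoped Matrix

open scoped MatrixOrder in
lemma psd_cauchy_schwarz {d : ℕ} {M : Matrix (Fin d) (Fin d) ℝ}
    (hM : M.PosSemidef) (x y : Fin d → ℝ) :
    (x ⬝ᵥ M *ᵥ y) ^ 2 ≤ (x ⬝ᵥ M *ᵥ x) * (y ⬝ᵥ M *ᵥ y) := by
  have hsym : (CFC.sqrt M)ᵀ = CFC.sqrt M := by
    have := (CFC.sqrt_nonneg M).1
    simpa [Matrix.IsHermitian] using this
  have key : ∀ a b : Fin d → ℝ, a ⬝ᵥ M *ᵥ b = (CFC.sqrt M *ᵥ a) ⬝ᵥ (CFC.sqrt M *ᵥ b) := by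
    intro a b
    conv_lhs => rw [← CFC.sqrt_mul_sqrt_self M hM.nonneg]
    rw [← Matrix.mulVec_mulVec]
    nth_rewrite 1 [Matrix.dotProduct_mulVec]
    rw [← hsym, Matrix.vecMul_transpose, hsym]
  rw [key x y, key x x, key y y]
  simpa [dotProduct, pow_two] using
    Finset.sum_mul_sq_le_sq_mul_sq Finset.univ (CFC.sqrt M *ᵥ x) (CFC.sqrt M *ᵥ y)

theorem implicit_function_perturbation_bound {d : ℕ}
    (F G : (Fin d → ℝ) → ℝ) (hF : ContDiff ℝ 2 F) (hG : ContDiff ℝ 2 G)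
    (θs θh : Fin d → ℝ)
    (hFcrit : ∀ i, fderiv ℝ F θs (Pi.single i 1) = 0)
    (hGcrit : ∀ i, fderiv ℝ G θh (Pi.single i 1) = 0)
    (Sbar S0 : Matrix (Fin d) (Fin d) ℝ)
    (hSbar : ∀ i j, Sbar i j = ∫ t in (0:ℝ)..1,
        fderiv ℝ (fun θ => fderiv ℝ G θ (Pi.single j 1))
          (θs + t • (θh - θs)) (Pi.single i 1))
    (hS0 : S0.PosDef) (hLo : (Sbar - S0).PosSemidef) :
    Real.sqrt ((θh - θs) ⬝ᵥ S0 *ᵥ (θh - θs))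
      ≤ Real.sqrt ((fun i => fderiv ℝ G θs (Pi.single i 1)
            - fderiv ℝ F θs (Pi.single i 1)) ⬝ᵥ S0⁻¹ *ᵥ
          (fun i => fderiv ℝ G θs (Pi.single i 1)
            - fderiv ℝ F θs (Pi.single i 1))) := by
  set v := θh - θs with hv
  set g : Fin d → ℝ := fun i => fderiv ℝ G θs (Pi.single i 1) with hg
  -- the RHS vector equals g
  have hvec : (fun i => fderiv ℝ G θs (Pi.single i 1)
      - fderiv ℝ F θs (Pi.single i 1)) = g := by
    funext i; simp [hg, hFcrit i]
  rw [hvec]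
  -- FTC: v ᵥ* Sbar = -g componentwise
  have key : ∀ j, (∑ i, v i * Sbar i j) = -(g j) := by
    intro j
    set H : (Fin d → ℝ) → ℝ := fun θ => fderiv ℝ G θ (Pi.single j 1) with hH
    have hHd : ContDiff ℝ 1 H :=
      (hG.fderiv_right (le_refl _)).clm_apply contDiff_const
    have h2 : Continuous fun t : ℝ => θs + t • v := by continuity
    have hcont : ∀ w : Fin d → ℝ,
        Continuous fun t : ℝ => fderiv ℝ H (θs + t • v) w := by
      intro w
      exact (ContinuousLinearMap.apply ℝ ℝ w).continuous.comp
        ((hHd.continuous_fderiv one_ne_zero).comp h2)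
    have hftc : (∫ t in (0:ℝ)..1, fderiv ℝ H (θs + t • v) v)
        = H θh - H θs := by
      have hpath : ∀ t : ℝ, HasDerivAt (fun t : ℝ => θs + t • v) v t := by
        intro t
        simpa using ((hasDerivAt_id t).smul_const v).const_add θs
      have hderiv : ∀ t : ℝ, HasDerivAt (fun t => H (θs + t • v))
          (fderiv ℝ H (θs + t • v) v) t := fun t =>
        ((hHd.differentiable one_ne_zero _).hasFDerivAt).comp_hasDerivAt t (hpath t)
      have := intervalIntegral.integral_eq_sub_of_hasDerivAt
        (f := fun t => H (θs + t • v)) (fun t _ => hderiv t)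
        ((hcont v).intervalIntegrable 0 1)
      simpa [hv] using this
    have hsum : (∑ i, v i * Sbar i j)
        = ∫ t in (0:ℝ)..1, fderiv ℝ H (θs + t • v) v := by
      have h1 : ∀ i, v i * Sbar i j
          = ∫ t in (0:ℝ)..1, v i * fderiv ℝ H (θs + t • v) (Pi.single i 1) := by
        intro i
        rw [hSbar i j, intervalIntegral.integral_const_mul]
      rw [Finset.sum_congr rfl (fun i _ => h1 i),
        ← intervalIntegral.integral_finset_sum]
      · have hrepr : (∑ i, v i • (Pi.single i 1 : Fin d → ℝ)) = v := by
          simp_rw [← Pi.single_smul, smul_eq_mul, mul_one]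
          exact Finset.univ_sum_single v
        have hlin : ∀ p : Fin d → ℝ,
            fderiv ℝ H p v = ∑ i, v i * fderiv ℝ H p (Pi.single i 1) := by
          intro p
          conv_lhs => rw [← hrepr]
          rw [map_sum]
          simp
        congr 1
        funext t
        exact (hlin _).symm
      · intro i _
        exact (continuous_const.mul (hcont (Pi.single i 1))).intervalIntegrable 0 1
    rw [hsum, hftc]
    simp [hH, hg, hGcrit j]
  -- quadratic form identity: v ⬝ᵥ Sbar *ᵥ v = -(g ⬝ᵥ v)
  have hquad : v ⬝ᵥ Sbar *ᵥ v = -(g ⬝ᵥ v) := by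
    rw [Matrix.dotProduct_mulVec]
    have : v ᵥ* Sbar = fun j => -(g j) := by
      funext j
      simpa [Matrix.vecMul, dotProduct] using key j
    rw [this]
    simp [dotProduct, neg_mul, Finset.sum_neg_distrib]
  -- Loewner bound
  have hlow : v ⬝ᵥ S0 *ᵥ v ≤ -(g ⬝ᵥ v) := by
    have h0 := hLo.dotProduct_mulVec_nonneg v
    simp only [Matrix.sub_mulVec, dotProduct_sub, star_trivial] at h0
    linarith [hquad ▸ h0]
  set a := v ⬝ᵥ S0 *ᵥ v with hA
  set b := g ⬝ᵥ S0⁻¹ *ᵥ g with hB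
  have ha : 0 ≤ a := by simpa using hS0.posSemidef.dotProduct_mulVec_nonneg v
  have hb : 0 ≤ b := by simpa using hS0.inv.posSemidef.dotProduct_mulVec_nonneg g
  -- Cauchy–Schwarz: (g ⬝ᵥ v)^2 ≤ b * a
  have hcs : (g ⬝ᵥ v) ^ 2 ≤ b * a := by
    have hinv : S0⁻¹ *ᵥ (S0 *ᵥ v) = v := by
      rw [Matrix.mulVec_mulVec, Matrix.nonsing_inv_mul S0 (isUnit_iff_ne_zero.mpr hS0.det_pos.ne'),
        Matrix.one_mulVec]
    have h1 : g ⬝ᵥ v = g ⬝ᵥ S0⁻¹ *ᵥ (S0 *ᵥ v) := by rw [hinv]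
    have h2 := psd_cauchy_schwarz hS0.inv.posSemidef g (S0 *ᵥ v)
    have h3 : (S0 *ᵥ v) ⬝ᵥ S0⁻¹ *ᵥ (S0 *ᵥ v) = a := by
      rw [hinv, hA, dotProduct_comm]
    rw [h1]
    rw [h3] at h2
    exact h2
  -- conclude
  have hsq : a ^ 2 ≤ b * a := by nlinarith [hlow, hcs, ha]
  rcases ha.eq_or_lt with h | h
  · rw [← h]; simpa using Real.sqrt_nonneg b
  · have : a ≤ b := by nlinarith
    exact Real.sqrt_le_sqrt this
end
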